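/- arXiv:2402.17565 — 2 statements merged into one kernel-verified Lean document; each statement's English description precedes it below -/
import Mathlib

section
/- On a Riemannian manifold (M, g) with an orthogonal projection field P onto an integrable subbundle T𝓕 ⊂ TM of rank s, the identity (div P)(PX) = −(n−s)⟨X, H^⊥⟩ holds for all vector fields X, where H^⊥ is the mean curvature vector of the orthogonal complement distribution. Consequently, (div P) ∘ P = 0 if and only if the normal distribution (T𝓕)^⊥ has zero mean curvature. -/
open scoped BigOperators

/-- in an algebraic model of a Riemannian manifold `(Mⁿ, g)` —
`R` is the ring of smooth functions, `X` the `R`-module of vector fields,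
`g` the metric, `nabla` the Levi-Civita connection, `D W f` the derivative of the
function `f` along `W`, and `e` a local orthonormal frame adapted to a rank-`s`
distribution `T𝓕` with orthogonal projection `P` — the identity
`(div P)(PX) = −(n−s)⟨X, H^⊥⟩ = −⟨X, P(∑_{i>s} ∇_{e_i} e_i)⟩` holds, where
`(div P)(Y) = ∑ᵢ ⟨(∇_{e_i}P)Y, e_i⟩` and `(∇_W P)Y = ∇_W(PY) − P(∇_W Y)`.
Consequently `(div P) ∘ P = 0` iff the normal distribution is minimal. -/
theorem divP_circ_P
    {R X : Type*} [CommRing R] [AddCommGroup X] [Module R X]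
    (n s : ℕ) (hs : s ≤ n)
    (g : X →ₗ[R] X →ₗ[R] R)
    (nabla : X → X → X) (D : X → R → R)
    (e : Fin n → X)
    (hortho : ∀ i j, g (e i) (e j) = if i = j then 1 else 0)
    (P : X →ₗ[R] X)
    (hP2 : ∀ x, P (P x) = P x)
    (hPsym : ∀ x y, g (P x) y = g x (P y))
    (hPe : ∀ i : Fin n, (i : ℕ) < s → P (e i) = e i)
    (hPe' : ∀ i : Fin n, s ≤ (i : ℕ) → P (e i) = 0)
    (hcompat : ∀ w x y, D w (g x y) = g (nabla w x) y + g x (nabla w y))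
    (hD0 : ∀ w, D w (0 : R) = 0)
    (hnondeg : ∀ v : X, (∀ x, g x v = 0) → v = 0) :
    (∀ x : X,
        (∑ i, g (nabla (e i) (P (P x)) - P (nabla (e i) (P x))) (e i))
          = - g x (P (∑ i ∈ Finset.univ.filter (fun i : Fin n => s ≤ (i : ℕ)),
              nabla (e i) (e i))))
    ∧ ((∀ x : X,
          (∑ i, g (nabla (e i) (P (P x)) - P (nabla (e i) (P x))) (e i)) = 0)
        ↔ P (∑ i ∈ Finset.univ.filter (fun i : Fin n => s ≤ (i : ℕ)),
            nabla (e i) (e i)) = 0) := by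
  have key : ∀ x : X,
      (∑ i, g (nabla (e i) (P (P x)) - P (nabla (e i) (P x))) (e i))
        = - g x (P (∑ i ∈ Finset.univ.filter (fun i : Fin n => s ≤ (i : ℕ)),
            nabla (e i) (e i))) := by
    intro x
    have hterm : ∀ i : Fin n,
        g (nabla (e i) (P (P x)) - P (nabla (e i) (P x))) (e i)
          = if s ≤ (i : ℕ) then - g x (P (nabla (e i) (e i))) else 0 := by
      intro i
      rw [hP2, map_sub, LinearMap.sub_apply, hPsym]
      by_cases h : s ≤ (i : ℕ)
      · rw [if_pos h, hPe' i h, map_zero, sub_zero]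
        have h0 : g (P x) (e i) = 0 := by
          rw [hPsym, hPe' i h, map_zero]
        have hc := hcompat (e i) (P x) (e i)
        rw [h0, hD0] at hc
        have h1 : g (nabla (e i) (P x)) (e i)
            = - g (P x) (nabla (e i) (e i)) := by
          rw [eq_neg_iff_add_eq_zero, ← hc]
        rw [h1, hPsym]
      · rw [if_neg h, hPe i (lt_of_not_ge h), sub_self]
    rw [Finset.sum_congr rfl (fun i _ => hterm i), ← Finset.sum_filter,
      map_sum, map_sum, ← Finset.sum_neg_distrib]
  refine ⟨key, ?_, ?_⟩
  · intro h
    apply hnondeg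
    intro y
    have := (key y).symm.trans (h y)
    exact neg_eq_zero.mp this.symm.symm
  · intro h x
    rw [key x, h, map_zero, neg_zero]
end

section
/- The function f(ρ) = ∫ √(C₁ρ^{2p−2n+2} − ρ^{4p−4n+4}) / (C₁ − ρ^{2p−2n+2}) dρ + C₂ solves the ODE ρ·f'' = (p−n+1)·f'·(1 + (f')²) on any interval where C₁ρ^{2p−2n+2} − ρ^{4p−4n+4} > 0 and C₁ − ρ^{2p−2n+2} ≠ 0. -/
/-- The integrand `g(ρ) = √(C₁ρ^{2p−2n+2} − ρ^{4p−4n+4}) / (C₁ − ρ^{2p−2n+2})`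
(so that `f = ∫ g dρ + C₂` is the profile of the critical hypersurface of revolution). -/
noncomputable def profileSlope (n p C₁ : ℝ) (x : ℝ) : ℝ :=
  Real.sqrt (C₁ * x ^ (2 * p - 2 * n + 2) - x ^ (4 * p - 4 * n + 4)) /
    (C₁ - x ^ (2 * p - 2 * n + 2))

/-- the function `f(ρ) = ∫ g dρ + C₂` with
`g = profileSlope n p C₁` solves the ODE `ρ f'' = (p−n+1) f'(1 + (f')²)` on any
interval where `C₁ρ^{2p−2n+2} − ρ^{4p−4n+4} > 0` and `C₁ − ρ^{2p−2n+2} ≠ 0`;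
equivalently, `g` satisfies `ρ·g'(ρ) = (p−n+1)·g(ρ)·(1 + g(ρ)²)` there. -/
theorem profileSlope_solves_ode
    (n p C₁ : ℝ) (hn : 2 ≤ n) (hp : n ≤ p)
    (ρ : ℝ) (hρ : 0 < ρ)
    (hpos : 0 < C₁ * ρ ^ (2 * p - 2 * n + 2) - ρ ^ (4 * p - 4 * n + 4))
    (hden : C₁ - ρ ^ (2 * p - 2 * n + 2) ≠ 0) :
    HasDerivAt (profileSlope n p C₁)
      ((p - n + 1) * profileSlope n p C₁ ρ * (1 + (profileSlope n p C₁ ρ) ^ 2) / ρ) ρ := by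
  set a : ℝ := 2 * p - 2 * n + 2 with ha
  set b : ℝ := 4 * p - 4 * n + 4 with hb
  have hρ0 : ρ ≠ 0 := hρ.ne'
  -- derivatives of the power functions
  have h1 : HasDerivAt (fun x : ℝ => x ^ a) (a * ρ ^ (a - 1)) ρ :=
    Real.hasDerivAt_rpow_const (Or.inl hρ0)
  have h2 : HasDerivAt (fun x : ℝ => x ^ b) (b * ρ ^ (b - 1)) ρ :=
    Real.hasDerivAt_rpow_const (Or.inl hρ0)
  have hN : HasDerivAt (fun x : ℝ => C₁ * x ^ a - x ^ b)
      (C₁ * (a * ρ ^ (a - 1)) - b * ρ ^ (b - 1)) ρ := (h1.const_mul C₁).sub h2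
  have hNpos : 0 < C₁ * ρ ^ a - ρ ^ b := hpos
  have hs : HasDerivAt (fun x : ℝ => Real.sqrt (C₁ * x ^ a - x ^ b))
      ((C₁ * (a * ρ ^ (a - 1)) - b * ρ ^ (b - 1)) /
        (2 * Real.sqrt (C₁ * ρ ^ a - ρ ^ b))) ρ := hN.sqrt hNpos.ne'
  have hD : HasDerivAt (fun x : ℝ => C₁ - x ^ a) (0 - a * ρ ^ (a - 1)) ρ :=
    (hasDerivAt_const _ _).sub h1
  have hq := hs.div hD hden
  have key : HasDerivAt (profileSlope n p C₁)
      (((C₁ * (a * ρ ^ (a - 1)) - b * ρ ^ (b - 1)) /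
          (2 * Real.sqrt (C₁ * ρ ^ a - ρ ^ b)) * (C₁ - ρ ^ a) -
        Real.sqrt (C₁ * ρ ^ a - ρ ^ b) * (0 - a * ρ ^ (a - 1))) /
        (C₁ - ρ ^ a) ^ 2) ρ := hq
  convert key using 1
  -- algebraic identity
  set s : ℝ := Real.sqrt (C₁ * ρ ^ a - ρ ^ b) with hsdef
  have hs0 : 0 < s := Real.sqrt_pos.mpr hNpos
  have hs2 : s ^ 2 = C₁ * ρ ^ a - ρ ^ b := Real.sq_sqrt hNpos.le
  set u : ℝ := ρ ^ a with hu
  have hu0 : 0 < u := Real.rpow_pos_of_pos hρ a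
  have hv : ρ ^ b = u * u := by
    rw [hu, ← Real.rpow_add hρ]; congr 1; rw [ha, hb]; ring
  have ha1 : ρ ^ (a - 1) = u / ρ := by
    rw [Real.rpow_sub hρ, Real.rpow_one, hu]
  have hb1 : ρ ^ (b - 1) = u * u / ρ := by
    rw [Real.rpow_sub hρ, Real.rpow_one, hv]
  have hpn : a = 2 * (p - n + 1) := by rw [ha]; ring
  have hgoal : profileSlope n p C₁ ρ = s / (C₁ - u) := by
    rw [profileSlope, hsdef, hu, ha, hb]
  have hb2 : b = 2 * a := by rw [ha, hb]; ring
  rw [hgoal, ha1, hb1, hb2, hpn]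
  have hs2' : s * s = C₁ * u - u * u := by
    have := hs2; rw [hv] at this; nlinarith [this]
  field_simp
  linear_combination ((p - n + 1)*(s^2 + (C₁ - u)^2 - u*(C₁ - u))) * hs2'
end
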